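/- arXiv:2507.02422 — 2 statements merged into one kernel-verified Lean document; each statement's English description precedes it below -/
import Mathlib

section
/- Let Φ be a positive unital linear map from the n×n complex matrices to themselves, let x be a Hermitian n×n complex matrix, let f : ℝ → ℝ be a continuous convex function, and let I ⊆ ℝ be an interval on which f is monotone (either increasing or decreasing) and on which f(t) ≥ 0. Set p := e_I(Φ(x)), the spectral projection of Φ(x) on I. Then p·Φ(f(x))·p is positive semidefinite, and for every s > 0 one has rank e_{(s,∞)}(p·f(Φ(x))·p) ≤ rank e_{(s,∞)}(p·Φ(f(x))·p) (equivalently, the first spectral projection is Murray–von Neumann subequivalent to the second). -/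
open Matrix
open scoped ComplexOrder

/-- `g` applied to a Hermitian matrix via the functional calculus
(`g(A) = ∑ᵢ g(λᵢ) Pᵢ` for the spectral decomposition `A = ∑ᵢ λᵢ Pᵢ`). -/
noncomputable def matFun {k : ℕ} {A : Matrix (Fin k) (Fin k) ℂ} (hA : A.IsHermitian)
    (g : ℝ → ℝ) : Matrix (Fin k) (Fin k) ℂ := hA.cfc g

lemma matFun_isHermitian {k : ℕ} {A : Matrix (Fin k) (Fin k) ℂ} (hA : A.IsHermitian)
    (g : ℝ → ℝ) : (matFun hA g).IsHermitian := by
  rw [matFun, ← hA.cfc_eq g]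
  exact cfc_predicate g A

/-- The spectral projection `e_S(A) = ∑_{i : λᵢ ∈ S} Pᵢ` of a Hermitian matrix `A`
on a set `S ⊆ ℝ`. -/
noncomputable def specProj {k : ℕ} {A : Matrix (Fin k) (Fin k) ℂ} (hA : A.IsHermitian)
    (S : Set ℝ) : Matrix (Fin k) (Fin k) ℂ := matFun hA (Set.indicator S 1)

section AuxHelpers

variable {k : ℕ} {A : Matrix (Fin k) (Fin k) ℂ} (hA : A.IsHermitian)

private lemma contOnSpec' (g : ℝ → ℝ) : ContinuousOn g (spectrum ℝ A) :=
  (Matrix.finite_real_spectrum (A := A)).continuousOn g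

private lemma cfcMul' (g1 g2 : ℝ → ℝ) :
    hA.cfc g1 * hA.cfc g2 = hA.cfc (fun t => g1 t * g2 t) := by
  rw [← hA.cfc_eq, ← hA.cfc_eq, ← hA.cfc_eq, ← cfc_mul g1 g2 A (contOnSpec' g1) (contOnSpec' g2)]

private lemma cfcComp' {w : ℝ → ℝ} (hB : (hA.cfc w).IsHermitian) (g : ℝ → ℝ) :
    hB.cfc g = hA.cfc (g ∘ w) := by
  conv_lhs => rw [← hB.cfc_eq]
  rw [← hA.cfc_eq, ← hA.cfc_eq]
  exact (cfc_comp g w A hA (((Matrix.finite_real_spectrum (A := A)).image w).continuousOn g)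
      (contOnSpec' w)).symm

private lemma cfcSub' (g1 g2 : ℝ → ℝ) :
    hA.cfc g1 - hA.cfc g2 = hA.cfc (fun t => g1 t - g2 t) := by
  rw [← hA.cfc_eq, ← hA.cfc_eq, ← hA.cfc_eq, ← cfc_sub g1 g2 A (contOnSpec' g1) (contOnSpec' g2)]

private lemma cfcOne' : hA.cfc (fun _ => (1 : ℝ)) = 1 := by
  rw [← hA.cfc_eq]
  rw [show (fun _ : ℝ => (1:ℝ)) = (1 : ℝ → ℝ) from rfl]
  exact cfc_one ℝ A

private lemma cfcId' : hA.cfc id = A := by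
  rw [← hA.cfc_eq]
  exact cfc_id ℝ A

private lemma cfcAffine' (g1 g2 : ℝ → ℝ) (a b : ℝ) (h : ∀ t, g1 t = g2 t + (a + b * t)) :
    hA.cfc g1 = hA.cfc g2 + (a : ℝ) • (1 : Matrix (Fin k) (Fin k) ℂ) + b • A := by
  rw [← hA.cfc_eq, ← hA.cfc_eq]
  have h1 : g1 = fun t => g2 t + (a + b * t) := funext h
  rw [h1, cfc_add (a := A) g2 (fun t => a + b * t) (contOnSpec' g2) (contOnSpec' _),
    cfc_add (a := A) (fun _ => a) (fun t => b * t) (contOnSpec' _) (contOnSpec' _),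
    cfc_const a A (show IsSelfAdjoint A from hA),
    cfc_const_mul_id b A (show IsSelfAdjoint A from hA)]
  rw [add_assoc]
  congr 1
  congr 1
  rw [Algebra.algebraMap_eq_smul_one]

private lemma qForm' (w : ℝ → ℝ) (v : Fin k → ℂ) :
    star v ⬝ᵥ (hA.cfc w) *ᵥ v =
      ((∑ i, w (hA.eigenvalues i) *
        Complex.normSq ((star (hA.eigenvectorUnitary : Matrix (Fin k) (Fin k) ℂ) *ᵥ v) i) : ℝ) : ℂ) := by
  set U : Matrix (Fin k) (Fin k) ℂ := (hA.eigenvectorUnitary : Matrix (Fin k) (Fin k) ℂ) with hU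
  set c : Fin k → ℂ := star U *ᵥ v with hc
  have h1 : star v ᵥ* U = star c := by
    rw [hc, star_mulVec, star_eq_conjTranspose, conjTranspose_conjTranspose]
  rw [Matrix.IsHermitian.cfc, Unitary.conjStarAlgAut_apply, ← mulVec_mulVec, ← mulVec_mulVec, dotProduct_mulVec, h1, ← hc]
  simp only [mulVec_diagonal, dotProduct, Pi.star_apply, Function.comp_apply]
  push_cast
  congr 1 with i
  rw [mul_comm (star (c i)), mul_assoc]
  simp [Complex.star_def, Complex.mul_conj]

private lemma coordSupport' (w : ℝ → ℝ) (v : Fin k → ℂ) (hv : v = hA.cfc w *ᵥ v) (i : Fin k)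
    (hi : w (hA.eigenvalues i) = 0) :
    (star (hA.eigenvectorUnitary : Matrix (Fin k) (Fin k) ℂ) *ᵥ v) i = 0 := by
  set U : Matrix (Fin k) (Fin k) ℂ := (hA.eigenvectorUnitary : Matrix (Fin k) (Fin k) ℂ) with hU
  set c : Fin k → ℂ := star U *ᵥ v with hc
  have h2 : star U * U = 1 := Matrix.UnitaryGroup.star_mul_self hA.eigenvectorUnitary
  have h3 : c = diagonal (RCLike.ofReal ∘ w ∘ hA.eigenvalues) *ᵥ c := by
    conv_lhs => rw [hc, hv, Matrix.IsHermitian.cfc, Unitary.conjStarAlgAut_apply, mulVec_mulVec, ← mul_assoc, ← mul_assoc,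
      h2, one_mul, ← mulVec_mulVec]
  have := congrFun h3 i
  rw [mulVec_diagonal] at this
  simp only [Function.comp_apply, hi, RCLike.ofReal_zero, zero_mul] at this
  exact this

private lemma vec_eq_U_mulVec' (v : Fin k → ℂ) :
    v = (hA.eigenvectorUnitary : Matrix (Fin k) (Fin k) ℂ) *ᵥ
      (star (hA.eigenvectorUnitary : Matrix (Fin k) (Fin k) ℂ) *ᵥ v) := by
  rw [mulVec_mulVec, (Matrix.mem_unitaryGroup_iff).mp (hA.eigenvectorUnitary).2, one_mulVec]

private lemma cfcRank' (w : ℝ → ℝ) :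
    (hA.cfc w).rank = Fintype.card {i // w (hA.eigenvalues i) ≠ 0} := by
  have hdet : IsUnit (star (hA.eigenvectorUnitary : Matrix (Fin k) (Fin k) ℂ)).det := by
    rw [star_eq_conjTranspose, det_conjTranspose]
    exact (Matrix.UnitaryGroup.det_isUnit hA.eigenvectorUnitary).star
  rw [Matrix.IsHermitian.cfc, Unitary.conjStarAlgAut_apply, Matrix.rank_mul_eq_left_of_isUnit_det _ _ hdet,
    Matrix.rank_mul_eq_right_of_isUnit_det _ _
      (Matrix.UnitaryGroup.det_isUnit hA.eigenvectorUnitary),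
    Matrix.rank_diagonal]
  apply Fintype.card_congr (Equiv.subtypeEquivRight _)
  intro i
  simp [RCLike.ofReal_eq_zero]

private lemma cfcPosSemidef' (w : ℝ → ℝ) (hw : ∀ i, 0 ≤ w (hA.eigenvalues i)) :
    (hA.cfc w).PosSemidef := by
  refine Matrix.PosSemidef.of_dotProduct_mulVec_nonneg ?_ ?_
  · rw [← hA.cfc_eq w]; exact cfc_predicate w A
  · intro v
    rw [qForm', Complex.zero_le_real]
    exact Finset.sum_nonneg fun i _ => mul_nonneg (hw i) (Complex.normSq_nonneg _)

private lemma qHermReal' {M : Matrix (Fin k) (Fin k) ℂ} (hM : M.IsHermitian) (v : Fin k → ℂ) :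
    star v ⬝ᵥ M *ᵥ v = (((star v ⬝ᵥ M *ᵥ v).re : ℝ) : ℂ) := by
  have h : star (star v ⬝ᵥ M *ᵥ v) = star v ⬝ᵥ M *ᵥ v := by
    conv_lhs => rw [star_dotProduct, star_star, star_mulVec, hM.eq, ← dotProduct_mulVec]
  exact ((Complex.conj_eq_iff_re).mp h).symm

private lemma qConj' {p : Matrix (Fin k) (Fin k) ℂ} (hp : p.IsHermitian)
    (M : Matrix (Fin k) (Fin k) ℂ) (v : Fin k → ℂ) :
    star v ⬝ᵥ (p * M * p) *ᵥ v = star (p *ᵥ v) ⬝ᵥ M *ᵥ (p *ᵥ v) := by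
  conv_rhs => rw [star_mulVec, hp.eq]
  rw [← mulVec_mulVec, ← mulVec_mulVec, dotProduct_mulVec (star v) p]

end AuxHelpers

private lemma specProj_congr' {k : ℕ} {A B : Matrix (Fin k) (Fin k) ℂ} (hAB : A = B)
    (hA : A.IsHermitian) (hB : B.IsHermitian) (S : Set ℝ) :
    hA.cfc (Set.indicator S 1) = hB.cfc (Set.indicator S 1) := by
  subst hAB; rfl

private lemma indicator_one_cases (S : Set ℝ) (t : ℝ) :
    (t ∈ S ∧ Set.indicator S (1 : ℝ → ℝ) t = 1) ∨
    (t ∉ S ∧ Set.indicator S (1 : ℝ → ℝ) t = 0) := by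
  by_cases h : t ∈ S
  · exact Or.inl ⟨h, by simp [Set.indicator_of_mem h]⟩
  · exact Or.inr ⟨h, by simp [Set.indicator_of_notMem h]⟩

private lemma exists_supporting_line' {f : ℝ → ℝ} (hconv : ConvexOn ℝ Set.univ f) (t₀ : ℝ) :
    ∃ b : ℝ, ∀ t, f t₀ + b * (t - t₀) ≤ f t := by
  have hmono : MonotoneOn (slope f t₀) (Set.univ \ {t₀}) :=
    hconv.slope_mono (Set.mem_univ t₀)
  set S : Set ℝ := slope f t₀ '' Set.Iio t₀ with hS
  have hSne : S.Nonempty := ⟨_, ⟨t₀ - 1, by simp, rfl⟩⟩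
  have hub : ∀ u ∈ Set.Iio t₀, ∀ v ∈ Set.Ioi t₀, slope f t₀ u ≤ slope f t₀ v := by
    intro u hu v hv
    exact hmono ⟨trivial, by simp [ne_of_lt (Set.mem_Iio.mp hu)]⟩
      ⟨trivial, by simp [ne_of_gt (Set.mem_Ioi.mp hv)]⟩
      (le_of_lt (lt_trans (Set.mem_Iio.mp hu) (Set.mem_Ioi.mp hv)))
  have hbdd : BddAbove S := ⟨slope f t₀ (t₀ + 1), by
    rintro - ⟨u, hu, rfl⟩
    exact hub u hu (t₀ + 1) (by simp)⟩
  refine ⟨sSup S, fun t => ?_⟩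
  rcases lt_trichotomy t t₀ with h | h | h
  · have hle : slope f t₀ t ≤ sSup S := le_csSup hbdd ⟨t, h, rfl⟩
    rw [slope_def_field] at hle
    have ht : t - t₀ < 0 := by linarith
    rw [div_le_iff_of_neg ht] at hle
    linarith
  · simp [h]
  · have hge : sSup S ≤ slope f t₀ t := by
      apply csSup_le hSne
      rintro - ⟨u, hu, rfl⟩
      exact hub u hu t h
    rw [slope_def_field] at hge
    have ht : 0 < t - t₀ := by linarith
    rw [le_div_iff₀ ht] at hge
    linarith

private lemma comb_bounds' {k : ℕ} (μ w : Fin k → ℝ) (hw : ∀ i, 0 ≤ w i)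
    (hpos : 0 < ∑ i, w i) :
    ∃ i₀ i₁, w i₀ ≠ 0 ∧ w i₁ ≠ 0 ∧
      μ i₀ ≤ (∑ i, w i * μ i) / (∑ i, w i) ∧ (∑ i, w i * μ i) / (∑ i, w i) ≤ μ i₁ := by
  classical
  set T : Finset (Fin k) := Finset.univ.filter (fun i => w i ≠ 0) with hT
  have hTne : T.Nonempty := by
    by_contra hc
    rw [Finset.not_nonempty_iff_eq_empty] at hc
    have : ∀ i, w i = 0 := by
      intro i
      by_contra hwi
      have : i ∈ T := by simp [hT, hwi]
      simp [hc] at this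
    simp [this] at hpos
  obtain ⟨i₀, hi₀T, hi₀⟩ := T.exists_min_image μ hTne
  obtain ⟨i₁, hi₁T, hi₁⟩ := T.exists_max_image μ hTne
  have hmem : ∀ i, i ∈ T ↔ w i ≠ 0 := by intro i; simp [hT]
  refine ⟨i₀, i₁, (hmem i₀).mp hi₀T, (hmem i₁).mp hi₁T, ?_, ?_⟩
  · rw [le_div_iff₀ hpos]
    calc μ i₀ * ∑ i, w i = ∑ i, w i * μ i₀ := by rw [Finset.mul_sum]; congr 1; ext i; ring
    _ ≤ ∑ i, w i * μ i := by
        apply Finset.sum_le_sum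
        intro i _
        by_cases hwi : w i = 0
        · simp [hwi]
        · exact mul_le_mul_of_nonneg_left (hi₀ i ((hmem i).mpr hwi)) (hw i)
  · rw [div_le_iff₀ hpos]
    calc (∑ i, w i * μ i) ≤ ∑ i, w i * μ i₁ := by
          apply Finset.sum_le_sum
          intro i _
          by_cases hwi : w i = 0
          · simp [hwi]
          · exact mul_le_mul_of_nonneg_left (hi₁ i ((hmem i).mpr hwi)) (hw i)
    _ = μ i₁ * ∑ i, w i := by rw [Finset.mul_sum]; congr 1; ext i; ring

private lemma jensen_quad' {n : ℕ}
    (Φ : Matrix (Fin n) (Fin n) ℂ →ₗ[ℂ] Matrix (Fin n) (Fin n) ℂ)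
    (hΦpos : ∀ y : Matrix (Fin n) (Fin n) ℂ, y.PosSemidef → (Φ y).PosSemidef)
    (hΦ1 : Φ 1 = 1)
    {x : Matrix (Fin n) (Fin n) ℂ} (hx : x.IsHermitian)
    (f : ℝ → ℝ) (hconv : ConvexOn ℝ Set.univ f)
    (ξ : Fin n → ℂ) (nq t₀ : ℝ)
    (hξ1 : star ξ ⬝ᵥ ξ = ((nq : ℝ) : ℂ))
    (hξ2 : star ξ ⬝ᵥ (Φ x) *ᵥ ξ = ((t₀ * nq : ℝ) : ℂ)) :
    f t₀ * nq ≤ (star ξ ⬝ᵥ (Φ (hx.cfc f)) *ᵥ ξ).re := by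
  obtain ⟨b, hb⟩ := exists_supporting_line' hconv t₀
  set a : ℝ := f t₀ - b * t₀ with ha
  set g : ℝ → ℝ := fun t => f t - (a + b * t) with hg
  have hg0 : ∀ t, 0 ≤ g t := by
    intro t
    have := hb t
    simp only [hg, ha]
    nlinarith
  have hgPSD : (Φ (hx.cfc g)).PosSemidef :=
    hΦpos _ (cfcPosSemidef' hx g (fun i => hg0 _))
  have hsplit : hx.cfc f = hx.cfc g + (a : ℝ) • (1 : Matrix (Fin n) (Fin n) ℂ) + b • x :=
    cfcAffine' hx f g a b (fun t => by simp only [hg]; ring)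
  have hΦsplit : Φ (hx.cfc f) = Φ (hx.cfc g) + (a : ℂ) • (1 : Matrix (Fin n) (Fin n) ℂ)
      + (b : ℂ) • (Φ x) := by
    rw [hsplit, map_add, map_add]
    congr 1
    · congr 1
      rw [← algebraMap_smul ℂ a (1 : Matrix (Fin n) (Fin n) ℂ), LinearMap.map_smul, hΦ1]
      norm_num
    · rw [← algebraMap_smul ℂ b x, LinearMap.map_smul]
      norm_num
  have hquad : star ξ ⬝ᵥ (Φ (hx.cfc f)) *ᵥ ξ
      = star ξ ⬝ᵥ (Φ (hx.cfc g)) *ᵥ ξ + (a : ℂ) * ((nq : ℝ) : ℂ)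
        + (b : ℂ) * ((t₀ * nq : ℝ) : ℂ) := by
    rw [hΦsplit, add_mulVec, add_mulVec, dotProduct_add, dotProduct_add,
      smul_mulVec, smul_mulVec, dotProduct_smul, dotProduct_smul,
      one_mulVec, hξ1, hξ2, smul_eq_mul, smul_eq_mul]
  have h0 : 0 ≤ (star ξ ⬝ᵥ (Φ (hx.cfc g)) *ᵥ ξ).re := by
    have := hgPSD.dotProduct_mulVec_nonneg ξ
    rw [Complex.le_def] at this
    simpa using this.1
  have hre : (star ξ ⬝ᵥ (Φ (hx.cfc f)) *ᵥ ξ).re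
      = (star ξ ⬝ᵥ (Φ (hx.cfc g)) *ᵥ ξ).re + a * nq + b * (t₀ * nq) := by
    rw [hquad]
    simp [Complex.add_re, Complex.ofReal_mul]
  have harith : a * nq + b * (t₀ * nq) = f t₀ * nq := by rw [ha]; ring
  rw [hre]
  linarith [h0]

private lemma key_estimate' {n : ℕ}
    (Φ : Matrix (Fin n) (Fin n) ℂ →ₗ[ℂ] Matrix (Fin n) (Fin n) ℂ)
    (hΦpos : ∀ y : Matrix (Fin n) (Fin n) ℂ, y.PosSemidef → (Φ y).PosSemidef)
    (hΦ1 : Φ 1 = 1)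
    {x : Matrix (Fin n) (Fin n) ℂ} (hx : x.IsHermitian)
    (f : ℝ → ℝ) (hconv : ConvexOn ℝ Set.univ f)
    (hΦx : (Φ x).IsHermitian)
    (ξ : Fin n → ℂ) (hξ0 : ξ ≠ 0)
    (w' : ℝ → ℝ) (hξ : ξ = hΦx.cfc w' *ᵥ ξ) :
    ∃ t₀ nq : ℝ, 0 < nq ∧
      (∃ i₀ i₁, w' (hΦx.eigenvalues i₀) ≠ 0 ∧ w' (hΦx.eigenvalues i₁) ≠ 0 ∧
        hΦx.eigenvalues i₀ ≤ t₀ ∧ t₀ ≤ hΦx.eigenvalues i₁) ∧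
      star ξ ⬝ᵥ ξ = ((nq : ℝ) : ℂ) ∧
      f t₀ * nq ≤ (star ξ ⬝ᵥ (Φ (hx.cfc f)) *ᵥ ξ).re := by
  classical
  set U : Matrix (Fin n) (Fin n) ℂ := (hΦx.eigenvectorUnitary : Matrix (Fin n) (Fin n) ℂ) with hU
  set c : Fin n → ℂ := star U *ᵥ ξ with hc
  set μ : Fin n → ℝ := hΦx.eigenvalues with hμ
  set wi : Fin n → ℝ := fun i => Complex.normSq (c i) with hwi
  have hwi0 : ∀ i, 0 ≤ wi i := fun i => Complex.normSq_nonneg _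
  have hc0 : c ≠ 0 := by
    intro h
    apply hξ0
    rw [vec_eq_U_mulVec' hΦx ξ, ← hU, ← hc, h, mulVec_zero]
  set nq : ℝ := ∑ i, wi i with hnq_def
  have hnq : 0 < nq := by
    obtain ⟨i, hi⟩ := Function.ne_iff.mp hc0
    exact Finset.sum_pos' (fun j _ => hwi0 j)
      ⟨i, Finset.mem_univ i, Complex.normSq_pos.mpr hi⟩
  have hnorm : star ξ ⬝ᵥ ξ = ((nq : ℝ) : ℂ) := by
    have h1 := qForm' hΦx (fun _ => (1 : ℝ)) ξ
    rw [cfcOne' hΦx, one_mulVec] at h1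
    rw [h1]
    norm_num [hnq_def, hwi, hc, hU]
  set t : ℝ := ∑ i, wi i * μ i with ht_def
  set t₀ : ℝ := t / nq with ht₀_def
  have hΦxq : star ξ ⬝ᵥ (Φ x) *ᵥ ξ = ((t₀ * nq : ℝ) : ℂ) := by
    have h1 := qForm' hΦx id ξ
    rw [cfcId' hΦx] at h1
    rw [h1]
    congr 1
    rw [ht₀_def, div_mul_cancel₀ _ (ne_of_gt hnq), ht_def]
    apply Finset.sum_congr rfl
    intro i _
    simp [hwi, hc, hU, hμ, mul_comm]
  obtain ⟨i₀, i₁, hi₀, hi₁, hle₀, hle₁⟩ := comb_bounds' μ wi hwi0 (hnq_def ▸ hnq)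
  have hsupp : ∀ i, wi i ≠ 0 → w' (μ i) ≠ 0 := by
    intro i hiw hcontra
    exact hiw (by simp [hwi, coordSupport' hΦx w' ξ hξ i hcontra, hc, hU])
  exact ⟨t₀, nq, hnq, ⟨i₀, i₁, hsupp i₀ hi₀, hsupp i₁ hi₁, hle₀, hle₁⟩, hnorm,
    jensen_quad' Φ hΦpos hΦ1 hx f hconv ξ nq t₀ hnorm hΦxq⟩

private lemma indicator_sq (S : Set ℝ) (t : ℝ) :
    Set.indicator S (1 : ℝ → ℝ) t * Set.indicator S (1 : ℝ → ℝ) t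
      = Set.indicator S (1 : ℝ → ℝ) t := by
  rcases indicator_one_cases S t with ⟨_, h⟩ | ⟨_, h⟩ <;> rw [h] <;> ring

/-- **Spectral comparison on an interval where `f` is monotone and nonnegative.**
Let `Φ` be a positive unital linear map on `n×n` matrices, `x` Hermitian, `f` continuous
convex, and `I` an interval on which `f` is monotone and nonnegative; set `p = e_I(Φ(x))`.
Then `p·Φ(f(x))·p` is positive semidefinite and, for every `s > 0`,
`rank e_(s,∞)(p·f(Φ(x))·p) ≤ rank e_(s,∞)(p·Φ(f(x))·p)` (Murray–von Neumann
subequivalence of the spectral projections). -/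
theorem specProj_rank_le_of_unital_positive_map {n : ℕ}
    (Φ : Matrix (Fin n) (Fin n) ℂ →ₗ[ℂ] Matrix (Fin n) (Fin n) ℂ)
    (hΦpos : ∀ y : Matrix (Fin n) (Fin n) ℂ, y.PosSemidef → (Φ y).PosSemidef)
    (hΦ1 : Φ 1 = 1)
    {x : Matrix (Fin n) (Fin n) ℂ} (hx : x.IsHermitian)
    (f : ℝ → ℝ) (hf : Continuous f) (hconv : ConvexOn ℝ Set.univ f)
    (I : Set ℝ) (hI : I.OrdConnected)
    (hmono : MonotoneOn f I ∨ AntitoneOn f I) (hfI : ∀ t ∈ I, 0 ≤ f t) :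
    ∀ hΦx : (Φ x).IsHermitian,
      (specProj hΦx I * Φ (matFun hx f) * specProj hΦx I).PosSemidef ∧
      ∀ s : ℝ, 0 < s →
        ∀ (h1 : (specProj hΦx I * matFun hΦx f * specProj hΦx I).IsHermitian)
          (h2 : (specProj hΦx I * Φ (matFun hx f) * specProj hΦx I).IsHermitian),
          (specProj h1 (Set.Ioi s)).rank ≤ (specProj h2 (Set.Ioi s)).rank := by
  intro hΦx
  classical
  have hmf : matFun hx f = hx.cfc f := rfl
  have hp_eq : specProj hΦx I = hΦx.cfc (Set.indicator I 1) := rfl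
  have hp_herm : (specProj hΦx I).IsHermitian := matFun_isHermitian hΦx _
  have hpp : specProj hΦx I * specProj hΦx I = specProj hΦx I := by
    rw [hp_eq, cfcMul' hΦx]
    exact congrArg hΦx.cfc (funext fun t => indicator_sq I t)
  have hindI : ∀ t, Set.indicator I (1 : ℝ → ℝ) t ≠ 0 → t ∈ I := by
    intro t ht
    rcases indicator_one_cases I t with ⟨h1, _⟩ | ⟨_, h2⟩
    · exact h1
    · exact absurd h2 ht
  have hM_herm : (Φ (matFun hx f)).IsHermitian := by
    have hsplit : matFun hx f
        = hx.cfc (fun t => max (f t) 0) - hx.cfc (fun t => max (-f t) 0) := by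
      rw [hmf, cfcSub' hx]
      refine congrArg hx.cfc (funext fun t => ?_)
      rcases le_total 0 (f t) with h | h
      · rw [max_eq_left h, max_eq_right (by linarith)]; ring
      · rw [max_eq_right h, max_eq_left (by linarith)]; ring
    rw [hsplit, map_sub]
    exact ((hΦpos _ (cfcPosSemidef' hx _ (fun i => le_max_right _ _))).1).sub
      ((hΦpos _ (cfcPosSemidef' hx _ (fun i => le_max_right _ _))).1)
  have hB_herm : (specProj hΦx I * Φ (matFun hx f) * specProj hΦx I).IsHermitian := by
    show _ᴴ = _
    rw [conjTranspose_mul, conjTranspose_mul, hp_herm.eq, hM_herm.eq, mul_assoc]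
  constructor
  · refine Matrix.PosSemidef.of_dotProduct_mulVec_nonneg hB_herm fun v => ?_
    rw [qConj' hp_herm]
    by_cases hξ0 : specProj hΦx I *ᵥ v = 0
    · simp [hξ0]
    · set ξ : Fin n → ℂ := specProj hΦx I *ᵥ v with hξdef
      have hξfix : ξ = hΦx.cfc (Set.indicator I 1) *ᵥ ξ := by
        rw [← hp_eq]
        conv_rhs => rw [hξdef, mulVec_mulVec, hpp]
      obtain ⟨t₀, nq, hnq, ⟨i₀, i₁, hi₀, hi₁, hle₀, hle₁⟩, hnorm, hjen⟩ :=
        key_estimate' Φ hΦpos hΦ1 hx f hconv hΦx ξ hξ0 (Set.indicator I 1) hξfix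
      have ht₀I : t₀ ∈ I := hI.out (hindI _ hi₀) (hindI _ hi₁) ⟨hle₀, hle₁⟩
      have hfnn : 0 ≤ f t₀ := hfI t₀ ht₀I
      rw [← hmf] at hjen
      rw [qHermReal' hM_herm, Complex.zero_le_real]
      nlinarith
  · intro s hs h1 h2
    have hA1 : specProj hΦx I * matFun hΦx f * specProj hΦx I
        = hΦx.cfc (fun t => Set.indicator I 1 t * f t * Set.indicator I 1 t) := by
      rw [hp_eq, show matFun hΦx f = hΦx.cfc f from rfl, cfcMul' hΦx, cfcMul' hΦx]
    have h1' : (hΦx.cfc (fun t => Set.indicator I 1 t * f t * Set.indicator I 1 t)).IsHermitian :=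
      hA1 ▸ h1
    have he : specProj h1 (Set.Ioi s)
        = hΦx.cfc (Set.indicator (Set.Ioi s) 1
            ∘ (fun t => Set.indicator I 1 t * f t * Set.indicator I 1 t)) := by
      rw [show specProj h1 (Set.Ioi s) = h1.cfc (Set.indicator (Set.Ioi s) 1) from rfl,
        specProj_congr' hA1 h1 h1']
      exact cfcComp' hΦx h1' (Set.indicator (Set.Ioi s) 1)
    -- the support property of the composed function
    have hg_supp : ∀ t, (Set.indicator (Set.Ioi s) (1 : ℝ → ℝ)
        ∘ (fun t => Set.indicator I (1 : ℝ → ℝ) t * f t * Set.indicator I (1 : ℝ → ℝ) t)) t ≠ 0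
        → (t ∈ I ∧ s < f t) := by
      intro t ht
      simp only [Function.comp_apply] at ht
      have hmem : Set.indicator I 1 t * f t * Set.indicator I 1 t ∈ Set.Ioi s := by
        rcases indicator_one_cases (Set.Ioi s)
          (Set.indicator I 1 t * f t * Set.indicator I 1 t) with ⟨hm, _⟩ | ⟨_, hv⟩
        · exact hm
        · exact (ht hv).elim
      rw [Set.mem_Ioi] at hmem
      rcases indicator_one_cases I t with ⟨hm, hv⟩ | ⟨_, hv⟩
      · rw [hv] at hmem
        simp only [one_mul, mul_one] at hmem
        exact ⟨hm, hmem⟩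
      · rw [hv] at hmem
        simp at hmem
        linarith
    -- idempotents and projection compatibility
    have hee : specProj h1 (Set.Ioi s) * specProj h1 (Set.Ioi s) = specProj h1 (Set.Ioi s) := by
      rw [he, cfcMul' hΦx]
      refine congrArg hΦx.cfc (funext fun t => ?_)
      simp only [Function.comp_apply]
      exact indicator_sq _ _
    have hq_eq : specProj h2 (Set.Iic s) = h2.cfc (Set.indicator (Set.Iic s) 1) := rfl
    have hqq : specProj h2 (Set.Iic s) * specProj h2 (Set.Iic s) = specProj h2 (Set.Iic s) := by
      rw [hq_eq, cfcMul' h2]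
      exact congrArg h2.cfc (funext fun t => indicator_sq _ _)
    have hpe : specProj hΦx I * specProj h1 (Set.Ioi s) = specProj h1 (Set.Ioi s) := by
      rw [he, hp_eq, cfcMul' hΦx]
      refine congrArg hΦx.cfc (funext fun t => ?_)
      simp only [Function.comp_apply]
      by_cases hgt : Set.indicator (Set.Ioi s) (1 : ℝ → ℝ)
          (Set.indicator I (1 : ℝ → ℝ) t * f t * Set.indicator I (1 : ℝ → ℝ) t) = 0
      · rw [hgt, mul_zero]
      · have hmemI : t ∈ I := (hg_supp t (by simpa [Function.comp_apply] using hgt)).1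
        rw [Set.indicator_of_mem hmemI]
        simp
    -- the intersection of the ranges is trivial
    have hVW : LinearMap.range (specProj h1 (Set.Ioi s)).mulVecLin
        ⊓ LinearMap.range (specProj h2 (Set.Iic s)).mulVecLin = ⊥ := by
      rw [Submodule.eq_bot_iff]
      rintro ξ ⟨hξV, hξW⟩
      by_contra hξ0
      obtain ⟨u, hu⟩ := hξV
      rw [Matrix.mulVecLin_apply] at hu
      have hξe : specProj h1 (Set.Ioi s) *ᵥ ξ = ξ := by
        conv_lhs => rw [← hu, mulVec_mulVec, hee]
        exact hu
      obtain ⟨u2, hu2⟩ := hξW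
      rw [Matrix.mulVecLin_apply] at hu2
      have hξq : specProj h2 (Set.Iic s) *ᵥ ξ = ξ := by
        conv_lhs => rw [← hu2, mulVec_mulVec, hqq]
        exact hu2
      have hξp : specProj hΦx I *ᵥ ξ = ξ := by
        conv_lhs => rw [← hξe, mulVec_mulVec, hpe]
        exact hξe
      -- Jensen lower bound
      obtain ⟨t₀, nq, hnq, ⟨i₀, i₁, hi₀, hi₁, hle₀, hle₁⟩, hnorm, hjen⟩ :=
        key_estimate' Φ hΦpos hΦ1 hx f hconv hΦx ξ hξ0
          (Set.indicator (Set.Ioi s) 1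
            ∘ (fun t => Set.indicator I 1 t * f t * Set.indicator I 1 t))
          (by rw [← he]; exact hξe.symm)
      have hP₀ := hg_supp _ hi₀
      have hP₁ := hg_supp _ hi₁
      have ht₀I : t₀ ∈ I := hI.out hP₀.1 hP₁.1 ⟨hle₀, hle₁⟩
      have hft₀ : s < f t₀ := by
        rcases hmono with hm | hm
        · exact lt_of_lt_of_le hP₀.2 (hm hP₀.1 ht₀I hle₀)
        · exact lt_of_lt_of_le hP₁.2 (hm ht₀I hP₁.1 hle₁)
      rw [← hmf] at hjen
      have hlb : s * nq
          < (star ξ ⬝ᵥ (specProj hΦx I * Φ (matFun hx f) * specProj hΦx I) *ᵥ ξ).re := by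
        rw [qConj' hp_herm, hξp]
        nlinarith
      -- upper bound from membership in the range of q
      have hBq := qForm' h2 id ξ
      rw [cfcId' h2] at hBq
      have hBq1 := qForm' h2 (fun _ => (1 : ℝ)) ξ
      rw [cfcOne' h2, one_mulVec] at hBq1
      have hnq2 : (∑ i, Complex.normSq
          ((star (h2.eigenvectorUnitary : Matrix (Fin n) (Fin n) ℂ) *ᵥ ξ) i)) = nq := by
        have h3 := Complex.ofReal_inj.mp (hBq1.symm.trans hnorm)
        simpa [one_mul] using h3
      have hsupp2 : ∀ i, Complex.normSq
          ((star (h2.eigenvectorUnitary : Matrix (Fin n) (Fin n) ℂ) *ᵥ ξ) i) ≠ 0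
          → h2.eigenvalues i ≤ s := by
        intro i hi
        by_contra hgt
        have h0 : Set.indicator (Set.Iic s) (1 : ℝ → ℝ) (h2.eigenvalues i) = 0 :=
          Set.indicator_of_notMem (by simpa using hgt) _
        have hz := coordSupport' h2 (Set.indicator (Set.Iic s) 1) ξ
          (hq_eq ▸ hξq.symm) i h0
        rw [hz] at hi
        simp at hi
      have hbound : ∑ i, (h2.eigenvalues i) * Complex.normSq
          ((star (h2.eigenvectorUnitary : Matrix (Fin n) (Fin n) ℂ) *ᵥ ξ) i) ≤ s * nq := by
        rw [← hnq2, Finset.mul_sum]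
        apply Finset.sum_le_sum
        intro i _
        by_cases hz : Complex.normSq
            ((star (h2.eigenvectorUnitary : Matrix (Fin n) (Fin n) ℂ) *ᵥ ξ) i) = 0
        · rw [hz]; simp
        · exact mul_le_mul_of_nonneg_right (hsupp2 i hz) (Complex.normSq_nonneg _)
      have hub : (star ξ ⬝ᵥ (specProj hΦx I * Φ (matFun hx f) * specProj hΦx I) *ᵥ ξ).re
          ≤ s * nq := by
        rw [hBq]
        simpa [id] using hbound
      linarith
    -- dimension counting
    have hdim := Submodule.finrank_sup_add_finrank_inf_eq
      (LinearMap.range (specProj h1 (Set.Ioi s)).mulVecLin)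
      (LinearMap.range (specProj h2 (Set.Iic s)).mulVecLin)
    rw [hVW, finrank_bot] at hdim
    have hle_n : Module.finrank ℂ
        ↥(LinearMap.range (specProj h1 (Set.Ioi s)).mulVecLin
          ⊔ LinearMap.range (specProj h2 (Set.Iic s)).mulVecLin) ≤ n := by
      have hfr := Submodule.finrank_le (LinearMap.range (specProj h1 (Set.Ioi s)).mulVecLin
        ⊔ LinearMap.range (specProj h2 (Set.Iic s)).mulVecLin)
      rwa [Module.finrank_pi, Fintype.card_fin] at hfr
    have hranks : (specProj h1 (Set.Ioi s)).rank + (specProj h2 (Set.Iic s)).rank ≤ n := by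
      rw [Matrix.rank, Matrix.rank, ← hdim]
      simpa using hle_n
    have hrank_q : (specProj h2 (Set.Iic s)).rank
        = Fintype.card {i // ¬ (s < h2.eigenvalues i)} := by
      rw [hq_eq, cfcRank']
      apply Fintype.card_congr (Equiv.subtypeEquivRight _)
      intro i
      rcases indicator_one_cases (Set.Iic s) (h2.eigenvalues i) with ⟨hm, hv⟩ | ⟨hm, hv⟩ <;>
        rw [Set.mem_Iic] at hm <;> rw [hv] <;> simp [hm, not_lt]
    have hrank_goal : (specProj h2 (Set.Ioi s)).rank
        = Fintype.card {i // s < h2.eigenvalues i} := by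
      rw [show specProj h2 (Set.Ioi s) = h2.cfc (Set.indicator (Set.Ioi s) 1) from rfl, cfcRank']
      apply Fintype.card_congr (Equiv.subtypeEquivRight _)
      intro i
      rcases indicator_one_cases (Set.Ioi s) (h2.eigenvalues i) with ⟨hm, hv⟩ | ⟨hm, hv⟩ <;>
        rw [Set.mem_Ioi] at hm <;> rw [hv] <;> simp [hm]
    have hcompl : Fintype.card {i // ¬ (s < h2.eigenvalues i)}
        = n - Fintype.card {i // s < h2.eigenvalues i} := by
      rw [Fintype.card_subtype_compl (fun i : Fin n => s < h2.eigenvalues i), Fintype.card_fin]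
    have hcard_le : Fintype.card {i // s < h2.eigenvalues i} ≤ n := by
      have := Fintype.card_subtype_le (fun i : Fin n => s < h2.eigenvalues i)
      rwa [Fintype.card_fin] at this
    rw [hrank_goal]
    omega
end

section
/- Let Φ be a positive unital linear map from the n×n complex matrices to themselves, let x be a Hermitian n×n complex matrix, let f : ℝ → ℝ be a continuous convex function, let I ⊆ ℝ be an interval on which f is monotone and f(t) ≥ 0, set p := e_I(Φ(x)), and let s > 0. If ξ is a unit vector in ℂ^n satisfying e_{{t∈I : f(t)>s}}(Φ(x))·ξ = ξ, then Re⟨Φ(f(x))ξ, ξ⟩ > s; consequently the ranges of the spectral projections e_{(s,∞)}(p·f(Φ(x))·p) and e_{(−∞,s]}(p·Φ(f(x))·p) intersect trivially. -/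
open Matrix
open scoped ComplexOrder

section Helpers

variable {k : ℕ} {A : Matrix (Fin k) (Fin k) ℂ}

lemma matFun_mul (hA : A.IsHermitian) (g h : ℝ → ℝ) :
    matFun hA g * matFun hA h = matFun hA (fun t => g t * h t) := by
  rw [matFun, matFun, matFun, ← hA.cfc_eq, ← hA.cfc_eq, ← hA.cfc_eq,
    ← cfc_mul g h A ((Matrix.finite_real_spectrum (A := A)).continuousOn g)
      ((Matrix.finite_real_spectrum (A := A)).continuousOn h)]

lemma matFun_congr {B : Matrix (Fin k) (Fin k) ℂ} (hA : A.IsHermitian) (hB : B.IsHermitian)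
    (hAB : A = B) (g : ℝ → ℝ) : matFun hA g = matFun hB g := by subst hAB; rfl

lemma matFun_comp (hA : A.IsHermitian) (h g : ℝ → ℝ) (hB : (matFun hA h).IsHermitian) :
    matFun hB g = matFun hA (g ∘ h) := by
  have h1 : matFun hA h = cfc h A := (hA.cfc_eq h).symm
  have h2 : cfc (g ∘ h) A = cfc g (cfc h A) :=
    cfc_comp g h A hA (((Matrix.finite_real_spectrum (A := A)).image h).continuousOn g)
      ((Matrix.finite_real_spectrum (A := A)).continuousOn h)
  rw [matFun, ← hB.cfc_eq, h1, ← h2, matFun]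
  exact hA.cfc_eq _

lemma matFun_id (hA : A.IsHermitian) : matFun hA (fun t => t) = A := by
  rw [matFun]
  unfold Matrix.IsHermitian.cfc
  exact hA.spectral_theorem.symm

lemma matFun_one (hA : A.IsHermitian) : matFun hA (fun _ => 1) = 1 := by
  rw [matFun, ← hA.cfc_eq]
  exact cfc_const_one ℝ A hA

lemma coord (hA : A.IsHermitian) (g : ℝ → ℝ) (v : Fin k → ℂ) (i : Fin k) :
    (star (hA.eigenvectorUnitary : Matrix (Fin k) (Fin k) ℂ) *ᵥ (matFun hA g *ᵥ v)) i
      = (g (hA.eigenvalues i) : ℂ)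
        * ((star (hA.eigenvectorUnitary : Matrix (Fin k) (Fin k) ℂ) *ᵥ v) i) := by
  set U := (hA.eigenvectorUnitary : Matrix (Fin k) (Fin k) ℂ) with hU
  have hUU : star U * U = 1 := mem_unitaryGroup_iff'.mp hA.eigenvectorUnitary.2
  rw [matFun]
  unfold Matrix.IsHermitian.cfc
  rw [Unitary.conjStarAlgAut_apply]
  rw [← hU, mulVec_mulVec,
    show star U * (U * diagonal (RCLike.ofReal ∘ g ∘ hA.eigenvalues) * star U)
      = diagonal (RCLike.ofReal ∘ g ∘ hA.eigenvalues) * star U by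
        rw [← mul_assoc, ← mul_assoc, hUU, one_mul],
    ← mulVec_mulVec, mulVec_diagonal]
  rfl

lemma dot_conj (hA : A.IsHermitian) (v w : Fin k → ℂ) :
    star v ⬝ᵥ w = star (star (hA.eigenvectorUnitary : Matrix (Fin k) (Fin k) ℂ) *ᵥ v)
      ⬝ᵥ (star (hA.eigenvectorUnitary : Matrix (Fin k) (Fin k) ℂ) *ᵥ w) := by
  set U := (hA.eigenvectorUnitary : Matrix (Fin k) (Fin k) ℂ) with hU
  have hUU : U * star U = 1 := mem_unitaryGroup_iff.mp hA.eigenvectorUnitary.2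
  rw [star_mulVec, ← dotProduct_mulVec, mulVec_mulVec]
  rw [show (star U)ᴴ * star U = 1 by
    rw [← star_eq_conjTranspose, star_star, hUU], one_mulVec]

lemma dot_self_eq (v : Fin k → ℂ) :
    star v ⬝ᵥ v = ((∑ i, Complex.normSq (v i) : ℝ) : ℂ) := by
  rw [dotProduct]
  push_cast
  exact Finset.sum_congr rfl fun i _ => by
    rw [Pi.star_apply, Complex.normSq_eq_conj_mul_self]; rfl

lemma dot_matFun (hA : A.IsHermitian) (g : ℝ → ℝ) (v : Fin k → ℂ) :
    star v ⬝ᵥ (matFun hA g *ᵥ v)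
      = ((∑ i, g (hA.eigenvalues i)
          * Complex.normSq ((star (hA.eigenvectorUnitary : Matrix (Fin k) (Fin k) ℂ) *ᵥ v) i)
            : ℝ) : ℂ) := by
  rw [dot_conj hA, dotProduct]
  push_cast
  refine Finset.sum_congr rfl fun i _ => ?_
  rw [coord hA, Pi.star_apply, Complex.normSq_eq_conj_mul_self, Complex.star_def]
  ring

end Helpers

section Helpers2

variable {k : ℕ} {A : Matrix (Fin k) (Fin k) ℂ}

lemma specProj_idem (hA : A.IsHermitian) (S : Set ℝ) :
    specProj hA S * specProj hA S = specProj hA S := by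
  rw [specProj, matFun_mul]
  have h1 : (fun t => Set.indicator S (1 : ℝ → ℝ) t * Set.indicator S (1 : ℝ → ℝ) t)
      = Set.indicator S (1 : ℝ → ℝ) := by
    funext t
    by_cases h : t ∈ S
    · rw [Set.indicator_of_mem h]; simp
    · rw [Set.indicator_of_notMem h]; ring
  rw [h1]

lemma dot_le_of_specProj_Iic (hA : A.IsHermitian) (s : ℝ) {v : Fin k → ℂ}
    (hv : v ∈ Set.range (specProj hA (Set.Iic s)).mulVec) :
    (star v ⬝ᵥ (A *ᵥ v)).re ≤ s * ∑ i, Complex.normSq (v i) := by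
  obtain ⟨w, hw⟩ := hv
  set U := (hA.eigenvectorUnitary : Matrix (Fin k) (Fin k) ℂ) with hUdef
  set c := star U *ᵥ v with hc
  have hQv : specProj hA (Set.Iic s) *ᵥ v = v := by
    rw [← hw, mulVec_mulVec, specProj_idem]
  have hsupp : ∀ i, s < hA.eigenvalues i → c i = 0 := by
    intro i hi
    have h := congrArg (fun u => (star U *ᵥ u) i) hQv
    simp only [specProj] at h
    rw [coord hA] at h
    rw [Set.indicator_of_notMem (by simpa using hi.not_ge)] at h
    simpa [hc] using h.symm
  have hAv : star v ⬝ᵥ (A *ᵥ v)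
      = ((∑ i, hA.eigenvalues i * Complex.normSq (c i) : ℝ) : ℂ) := by
    conv_lhs => rw [← matFun_id hA]
    exact dot_matFun hA _ v
  have hnorm' : ∑ i, Complex.normSq (v i) = ∑ i, Complex.normSq (c i) := by
    apply Complex.ofReal_injective
    rw [← dot_self_eq, ← dot_self_eq, hc]
    exact dot_conj hA v v
  rw [hAv, Complex.ofReal_re, hnorm', Finset.mul_sum]
  refine Finset.sum_le_sum fun i _ => ?_
  by_cases h : s < hA.eigenvalues i
  · rw [hsupp i h]; simp
  · exact mul_le_mul_of_nonneg_right (not_lt.mp h) (Complex.normSq_nonneg _)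

noncomputable def eigProj {k : ℕ} {A : Matrix (Fin k) (Fin k) ℂ} (hA : A.IsHermitian)
    (j : Fin k) : Matrix (Fin k) (Fin k) ℂ :=
  vecMulVec (fun a => (hA.eigenvectorUnitary : Matrix (Fin k) (Fin k) ℂ) a j)
    (star fun b => (hA.eigenvectorUnitary : Matrix (Fin k) (Fin k) ℂ) b j)

lemma matFun_eq_sum_eigProj (hA : A.IsHermitian) (g : ℝ → ℝ) :
    matFun hA g = ∑ j, (g (hA.eigenvalues j) : ℂ) • eigProj hA j := by
  rw [matFun]
  unfold Matrix.IsHermitian.cfc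
  rw [Unitary.conjStarAlgAut_apply]
  ext a b
  rw [Matrix.sum_apply, Matrix.mul_apply]
  refine Finset.sum_congr rfl fun j _ => ?_
  rw [Matrix.mul_diagonal, Matrix.smul_apply, eigProj, Matrix.vecMulVec_apply]
  simp only [Function.comp_apply, smul_eq_mul, Pi.star_apply, Matrix.star_apply]
  norm_num
  ring

lemma sum_eigProj (hA : A.IsHermitian) : ∑ j, eigProj hA j = 1 := by
  have hVU : (hA.eigenvectorUnitary : Matrix (Fin k) (Fin k) ℂ)
      * star (hA.eigenvectorUnitary : Matrix (Fin k) (Fin k) ℂ) = 1 :=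
    mem_unitaryGroup_iff.mp hA.eigenvectorUnitary.2
  ext a b
  rw [Matrix.sum_apply]
  have h := congrFun (congrFun hVU a) b
  rw [Matrix.mul_apply] at h
  simpa [eigProj, Matrix.vecMulVec_apply, Matrix.star_apply] using h

lemma eigProj_posSemidef (hA : A.IsHermitian) (j : Fin k) : (eigProj hA j).PosSemidef := by
  rw [eigProj, vecMulVec_eq (Fin 1), ← conjTranspose_replicateCol]
  exact posSemidef_self_mul_conjTranspose _

end Helpers2

/-- **Key step in the spectral comparison lemma.**
Let `Φ` be a positive unital linear map on `n×n` matrices, `x` Hermitian, `f` continuous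
convex, `I` an interval on which `f` is monotone and nonnegative, `p = e_I(Φ(x))`, and
`s > 0`. If `ξ` is a unit vector with `e_{{t ∈ I : f(t) > s}}(Φ(x)) ξ = ξ`, then
`Re⟨Φ(f(x))ξ, ξ⟩ > s`; consequently the ranges of `e_(s,∞)(p·f(Φ(x))·p)` and
`e_(−∞,s](p·Φ(f(x))·p)` intersect trivially. -/
theorem specProj_inner_gt_and_ranges_trivial {n : ℕ}
    (Φ : Matrix (Fin n) (Fin n) ℂ →ₗ[ℂ] Matrix (Fin n) (Fin n) ℂ)
    (hΦpos : ∀ y : Matrix (Fin n) (Fin n) ℂ, y.PosSemidef → (Φ y).PosSemidef)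
    (hΦ1 : Φ 1 = 1)
    {x : Matrix (Fin n) (Fin n) ℂ} (hx : x.IsHermitian)
    (f : ℝ → ℝ) (hf : Continuous f) (hconv : ConvexOn ℝ Set.univ f)
    (I : Set ℝ) (hI : I.OrdConnected)
    (hmono : MonotoneOn f I ∨ AntitoneOn f I) (hfI : ∀ t ∈ I, 0 ≤ f t)
    (s : ℝ) (hs : 0 < s) :
    ∀ hΦx : (Φ x).IsHermitian,
      (∀ ξ : Fin n → ℂ, star ξ ⬝ᵥ ξ = 1 →
          (specProj hΦx {t | t ∈ I ∧ s < f t}).mulVec ξ = ξ →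
          s < (star ξ ⬝ᵥ (Φ (matFun hx f)).mulVec ξ).re) ∧
      ∀ (h1 : (specProj hΦx I * matFun hΦx f * specProj hΦx I).IsHermitian)
        (h2 : (specProj hΦx I * Φ (matFun hx f) * specProj hΦx I).IsHermitian),
        ∀ v : Fin n → ℂ,
          v ∈ Set.range (specProj h1 (Set.Ioi s)).mulVec →
          v ∈ Set.range (specProj h2 (Set.Iic s)).mulVec → v = 0 := by
  intro hΦx
  classical
  set J : Set ℝ := {t | t ∈ I ∧ s < f t} with hJdef
  have hJconv : Convex ℝ J := by
    rw [convex_iff_ordConnected]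
    refine ⟨fun t1 h1 t2 h2 u hu => ?_⟩
    have huI : u ∈ I := hI.out h1.1 h2.1 hu
    refine ⟨huI, ?_⟩
    rcases hmono with hm | hm
    · exact lt_of_lt_of_le h1.2 (hm h1.1 huI hu.1)
    · exact lt_of_lt_of_le h2.2 (hm huI h2.1 hu.2)
  have key : ∀ ξ : Fin n → ℂ, star ξ ⬝ᵥ ξ = 1 →
      (specProj hΦx J).mulVec ξ = ξ →
      s < (star ξ ⬝ᵥ (Φ (matFun hx f)).mulVec ξ).re := by
    intro ξ hξ hPξ
    set μ := hx.eigenvalues with hμ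
    set Q : Fin n → Matrix (Fin n) (Fin n) ℂ := eigProj hx with hQ
    have hQsum : ∀ g : ℝ → ℝ, matFun hx g = ∑ j, (g (μ j) : ℂ) • Q j :=
      fun g => matFun_eq_sum_eigProj hx g
    have hQone : (∑ j, Q j) = 1 := sum_eigProj hx
    have hQps : ∀ j, (Q j).PosSemidef := fun j => eigProj_posSemidef hx j
    set w : Fin n → ℝ := fun j => (star ξ ⬝ᵥ (Φ (Q j)).mulVec ξ).re with hw
    have hwim : ∀ j, star ξ ⬝ᵥ (Φ (Q j)).mulVec ξ = ((w j : ℝ) : ℂ) := by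
      intro j
      have h0 := (hΦpos _ (hQps j)).dotProduct_mulVec_nonneg ξ
      rw [Complex.le_def] at h0
      apply Complex.ext
      · simp [hw]
      · simpa using h0.2.symm
    have hwnn : ∀ j, 0 ≤ w j := by
      intro j
      have h0 := (hΦpos _ (hQps j)).dotProduct_mulVec_nonneg ξ
      rw [Complex.le_def] at h0
      simpa [hw] using h0.1
    have hdotg : ∀ g : ℝ → ℝ,
        star ξ ⬝ᵥ (Φ (matFun hx g)).mulVec ξ = ((∑ j, g (μ j) * w j : ℝ) : ℂ) := by
      intro g
      let L : Matrix (Fin n) (Fin n) ℂ →ₗ[ℂ] ℂ :=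
        { toFun := fun M => star ξ ⬝ᵥ (Φ M).mulVec ξ
          map_add' := fun M N => by
            simp only [map_add, Matrix.add_mulVec, dotProduct_add]
          map_smul' := fun r M => by
            simp only [_root_.map_smul, Matrix.smul_mulVec, dotProduct_smul,
              RingHom.id_apply, smul_eq_mul] }
      show L (matFun hx g) = _
      rw [hQsum g, map_sum]
      push_cast
      refine Finset.sum_congr rfl fun j _ => ?_
      rw [_root_.map_smul, smul_eq_mul]
      rw [show L (Q j) = ((w j : ℝ) : ℂ) from hwim j]
    have hwsum : ∑ j, w j = 1 := by
      have h := hdotg (fun _ => 1)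
      rw [matFun_one hx, hΦ1, Matrix.one_mulVec, hξ] at h
      have h' : ((1 : ℝ) : ℂ) = ((∑ j, 1 * w j : ℝ) : ℂ) := by
        rw [Complex.ofReal_one]; exact h
      have := Complex.ofReal_injective h'
      simpa using this.symm
    set lam : ℝ := ∑ j, μ j * w j with hlam
    have hlam1 : star ξ ⬝ᵥ (Φ x).mulVec ξ = ((lam : ℝ) : ℂ) := by
      have h := hdotg (fun t => t)
      rwa [matFun_id hx] at h
    set U := (hΦx.eigenvectorUnitary : Matrix (Fin n) (Fin n) ℂ) with hU
    set c := star U *ᵥ ξ with hc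
    have hsupp : ∀ i, hΦx.eigenvalues i ∉ J → c i = 0 := by
      intro i hi
      have h := congrArg (fun u => (star U *ᵥ u) i) hPξ
      simp only [specProj] at h
      rw [coord hΦx] at h
      rw [Set.indicator_of_notMem hi] at h
      simpa [hc] using h.symm
    have hlam2 : lam = ∑ i, hΦx.eigenvalues i * Complex.normSq (c i) := by
      have h := dot_matFun hΦx (fun t => t) ξ
      rw [matFun_id hΦx] at h
      exact Complex.ofReal_injective ((hlam1.symm.trans h))
    have hnorm1 : ∑ i, Complex.normSq (c i) = 1 := by
      apply Complex.ofReal_injective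
      rw [← dot_self_eq, hc, ← dot_conj hΦx ξ ξ, hξ, Complex.ofReal_one]
    have hlamJ : lam ∈ J := by
      have hmem := hJconv.sum_mem (t := Finset.univ.filter fun i => c i ≠ 0)
        (w := fun i => Complex.normSq (c i)) (z := hΦx.eigenvalues)
        (fun i _ => Complex.normSq_nonneg _)
        (by
          rw [Finset.sum_filter_of_ne (fun i _ hne => by
            intro hci; exact hne (by rw [hci]; simp))]
          exact hnorm1)
        (fun i hi => by
          by_contra hni
          exact (Finset.mem_filter.mp hi).2 (hsupp i hni))
      have heq : ∑ i ∈ Finset.univ.filter (fun i => c i ≠ 0),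
          Complex.normSq (c i) • hΦx.eigenvalues i = lam := by
        rw [Finset.sum_filter_of_ne (fun i _ hne => by
          intro hci
          exact hne (by rw [hci]; simp))]
        rw [hlam2]
        exact Finset.sum_congr rfl fun i _ => by rw [smul_eq_mul, mul_comm]
      rwa [heq] at hmem
    have hjensen : f lam ≤ ∑ j, w j * f (μ j) := by
      have h := hconv.map_sum_le (t := Finset.univ) (w := w) (p := μ)
        (fun j _ => hwnn j) hwsum (fun j _ => Set.mem_univ _)
      have heq : ∑ j, w j • μ j = lam := by
        rw [hlam]
        exact Finset.sum_congr rfl fun j _ => by rw [smul_eq_mul, mul_comm]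
      rw [heq] at h
      simpa using h
    have hre : (star ξ ⬝ᵥ (Φ (matFun hx f)).mulVec ξ).re = ∑ j, f (μ j) * w j := by
      rw [hdotg f, Complex.ofReal_re]
    rw [hre]
    calc s < f lam := hlamJ.2
      _ ≤ ∑ j, w j * f (μ j) := hjensen
      _ = ∑ j, f (μ j) * w j := Finset.sum_congr rfl fun j _ => mul_comm _ _
  refine ⟨key, ?_⟩
  intro h1 h2 v hv1 hv2
  by_contra hvne
  set p := specProj hΦx I with hp
  set P := specProj hΦx J with hPdef
  have hPP : P * P = P := specProj_idem hΦx J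
  have hpP : p * P = P := by
    rw [hp, hPdef, specProj, specProj, matFun_mul]
    have heq : (fun t => Set.indicator I (1 : ℝ → ℝ) t * Set.indicator J (1 : ℝ → ℝ) t)
        = Set.indicator J (1 : ℝ → ℝ) := by
      funext t
      by_cases h : t ∈ J
      · rw [Set.indicator_of_mem h, Set.indicator_of_mem h.1]; simp
      · rw [Set.indicator_of_notMem h]; ring
    rw [heq]
  set hfun : ℝ → ℝ := fun t => Set.indicator I (1 : ℝ → ℝ) t * f t * Set.indicator I (1 : ℝ → ℝ) t
    with hfundef
  have hA1eq : specProj hΦx I * matFun hΦx f * specProj hΦx I = matFun hΦx hfun := by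
    rw [specProj, matFun_mul, matFun_mul]
  have hB : (matFun hΦx hfun).IsHermitian := hA1eq ▸ h1
  have hproj1 : specProj h1 (Set.Ioi s) = P := by
    have heq : (Set.indicator (Set.Ioi s) (1 : ℝ → ℝ)) ∘ hfun = Set.indicator J (1 : ℝ → ℝ) := by
      funext t
      simp only [Function.comp_apply, hfundef]
      by_cases ht : t ∈ I
      · rw [Set.indicator_of_mem ht]
        simp only [Pi.one_apply, one_mul, mul_one]
        by_cases hst : s < f t
        · rw [Set.indicator_of_mem (Set.mem_Ioi.mpr hst),
            Set.indicator_of_mem (show t ∈ J from ⟨ht, hst⟩)]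
          simp
        · rw [Set.indicator_of_notMem (by simpa using hst),
            Set.indicator_of_notMem (show t ∉ J from fun htJ => hst htJ.2)]
      · rw [Set.indicator_of_notMem ht]
        rw [show (0:ℝ) * f t * 0 = 0 by ring]
        rw [Set.indicator_of_notMem (show (0:ℝ) ∉ Set.Ioi s from by simpa using hs.le),
          Set.indicator_of_notMem (show t ∉ J from fun htJ => ht htJ.1)]
    rw [specProj, matFun_congr h1 hB hA1eq, matFun_comp hΦx hfun _ hB, heq, hPdef, specProj]
  obtain ⟨w1, hw1⟩ := hv1
  rw [hproj1] at hw1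
  have hPv : P *ᵥ v = v := by
    rw [← hw1, mulVec_mulVec, hPP]
  have hpv : p *ᵥ v = v := by
    rw [← hPv, mulVec_mulVec, hpP]
  set N : ℝ := ∑ i, Complex.normSq (v i) with hN
  have hNpos : 0 < N := by
    obtain ⟨i, hi⟩ : ∃ i, v i ≠ 0 := by
      by_contra hno
      push_neg at hno
      exact hvne (funext fun i => hno i)
    exact Finset.sum_pos' (fun j _ => Complex.normSq_nonneg _)
      ⟨i, Finset.mem_univ i, Complex.normSq_pos.mpr hi⟩
  set a : ℝ := (Real.sqrt N)⁻¹ with ha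
  have haa : (a : ℂ) * (a : ℂ) = ((N⁻¹ : ℝ) : ℂ) := by
    rw [← Complex.ofReal_mul]
    congr 1
    rw [ha, ← mul_inv, Real.mul_self_sqrt hNpos.le]
  set ξ : Fin n → ℂ := (a : ℂ) • v with hξdef
  have hξnorm : star ξ ⬝ᵥ ξ = 1 := by
    rw [hξdef, star_smul, smul_dotProduct, dotProduct_smul, smul_eq_mul, smul_eq_mul,
      Complex.star_def, Complex.conj_ofReal, ← mul_assoc, haa, dot_self_eq, ← hN,
      ← Complex.ofReal_mul, inv_mul_cancel₀ hNpos.ne', Complex.ofReal_one]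
  have hPξ : (specProj hΦx J).mulVec ξ = ξ := by
    rw [show specProj hΦx J = P from rfl, hξdef, mulVec_smul, hPv]
  have h1s := key ξ hξnorm hPξ
  have hscale : star ξ ⬝ᵥ ((Φ (matFun hx f)) *ᵥ ξ)
      = ((N⁻¹ : ℝ) : ℂ) * (star v ⬝ᵥ ((Φ (matFun hx f)) *ᵥ v)) := by
    rw [hξdef, star_smul, mulVec_smul, smul_dotProduct, dotProduct_smul, smul_eq_mul,
      smul_eq_mul, Complex.star_def, Complex.conj_ofReal, ← mul_assoc, haa]
  rw [hscale, Complex.re_ofReal_mul] at h1s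
  have hXgt : s * N < (star v ⬝ᵥ ((Φ (matFun hx f)) *ᵥ v)).re := by
    rw [inv_mul_eq_div, lt_div_iff₀ hNpos] at h1s
    linarith
  have hle := dot_le_of_specProj_Iic h2 s hv2
  rw [← hN] at hle
  have hcomm : star v ⬝ᵥ ((specProj hΦx I * Φ (matFun hx f) * specProj hΦx I) *ᵥ v)
      = star v ⬝ᵥ ((Φ (matFun hx f)) *ᵥ v) := by
    have hps : star v ᵥ* specProj hΦx I = star v := by
      have hherm : (specProj hΦx I)ᴴ = specProj hΦx I := matFun_isHermitian hΦx _
      rw [← hherm, ← star_mulVec]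
      rw [show specProj hΦx I = p from rfl, hpv]
    rw [← mulVec_mulVec, ← mulVec_mulVec]
    rw [show specProj hΦx I *ᵥ v = v from hpv]
    rw [dotProduct_mulVec, hps]
  rw [hcomm] at hle
  linarith
end
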